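/- For all real p with 0 ≤ p ≤ 1 and all real t with 0 ≤ t < 2: p·exp(t(p−1)) + (1−p)·exp(t·p) ≤ 1 + t²/2. -/

import Mathlib

lemma expA {t : ℝ} (ht0 : 0 ≤ t) (ht2 : t ≤ 2) : Real.exp t ≤ 1 + t + 2 * t ^ 2 := by
  have h := Real.exp_bound' (x := t/2) (by linarith) (by linarith) (n := 2) (by norm_num)
  have h2 : Real.exp (t/2) ≤ 1 + t/2 + 3 * t^2 / 16 := by
    norm_num [Finset.sum_range_succ] at h
    nlinarith [h]
  have h3 : Real.exp t = Real.exp (t/2) * Real.exp (t/2) := by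
    rw [← Real.exp_add]; ring_nf
  have hpos : (0:ℝ) < Real.exp (t/2) := Real.exp_pos _
  have h4 : t^3 ≤ 2*t^2 := by nlinarith [sq_nonneg t]
  have h5 : t^4 ≤ 4*t^2 := by nlinarith [sq_nonneg t, sq_nonneg (t*t)]
  calc Real.exp t ≤ (1 + t/2 + 3*t^2/16) * (1 + t/2 + 3*t^2/16) := by
        rw [h3]; exact mul_le_mul h2 h2 hpos.le (by nlinarith)
    _ ≤ 1 + t + 2 * t ^ 2 := by nlinarith [sq_nonneg t]

lemma expB (p : ℝ) (hp0 : 0 ≤ p) (hp1 : p ≤ 1) {t : ℝ} (ht0 : 0 ≤ t) :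
    p * Real.exp (t * (p - 1)) + (1 - p) * Real.exp (t * p)
      ≤ 1 + p * (1 - p) * (Real.exp t - 1 - t) := by
  set F : ℝ → ℝ := fun x =>
    1 + p * (1 - p) * (Real.exp x - 1 - x)
      - (p * Real.exp (x * (p - 1)) + (1 - p) * Real.exp (x * p)) with hF
  have key : ∀ x : ℝ, HasDerivAt F
      (p * (1 - p) * (Real.exp x - 1)
        - (p * ((p - 1) * Real.exp (x * (p - 1))) + (1 - p) * (p * Real.exp (x * p)))) x := by
    intro x
    have h1 : HasDerivAt (fun x : ℝ => Real.exp (x * (p - 1)))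
        ((p - 1) * Real.exp (x * (p - 1))) x := by
      have := (Real.hasDerivAt_exp (x * (p - 1))).comp x
        ((hasDerivAt_id x).mul_const (p - 1))
      simpa [mul_comm, Function.comp_def] using this
    have h2 : HasDerivAt (fun x : ℝ => Real.exp (x * p))
        (p * Real.exp (x * p)) x := by
      have := (Real.hasDerivAt_exp (x * p)).comp x ((hasDerivAt_id x).mul_const p)
      simpa [mul_comm, Function.comp_def] using this
    have hA : HasDerivAt (fun x : ℝ => Real.exp x - 1 - x) (Real.exp x - 1) x := by
      simpa [Pi.sub_def, id_eq] using ((Real.hasDerivAt_exp x).sub_const 1).sub (hasDerivAt_id x)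
    exact (((hA.const_mul (p * (1 - p))).const_add 1).sub
      ((h1.const_mul p).add (h2.const_mul (1 - p))))
  have mono : MonotoneOn F (Set.Ici (0:ℝ)) := by
    apply monotoneOn_of_deriv_nonneg (convex_Ici 0)
    · exact fun x _ => (key x).continuousAt.continuousWithinAt
    · exact fun x _ => (key x).differentiableAt.differentiableWithinAt
    · intro x hx
      rw [(key x).deriv]
      rw [interior_Ici] at hx
      have hx0 : (0:ℝ) ≤ x := le_of_lt hx
      have hA1 : (1:ℝ) ≤ Real.exp (x * p) := Real.one_le_exp (mul_nonneg hx0 hp0)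
      have hB1 : (1:ℝ) ≤ Real.exp (x * (1 - p)) := Real.one_le_exp (mul_nonneg hx0 (by linarith))
      have hCB : Real.exp (x * (p - 1)) * Real.exp (x * (1 - p)) = 1 := by
        rw [← Real.exp_add]; ring_nf; exact Real.exp_zero
      have hAB : Real.exp x = Real.exp (x * p) * Real.exp (x * (1 - p)) := by
        rw [← Real.exp_add]; ring_nf
      have hpq : 0 ≤ p * (1 - p) := mul_nonneg hp0 (by linarith)
      have hkey : 0 ≤ Real.exp x - 1 + Real.exp (x * (p - 1)) - Real.exp (x * p) := by
        have hBpos : 0 < Real.exp (x * (1 - p)) := Real.exp_pos _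
        nlinarith [mul_nonneg (sub_nonneg.2 hB1)
          (sub_nonneg.2 (one_le_mul_of_one_le_of_one_le hA1 hB1))]
      nlinarith [mul_nonneg hpq hkey]
  have h0 : F 0 = 0 := by simp [hF]
  have := mono (Set.self_mem_Ici) (Set.mem_Ici.2 ht0) ht0
  rw [h0] at this
  simp only [hF] at this
  linarith

theorem stmt_4 (p t : ℝ) (hp0 : 0 ≤ p) (hp1 : p ≤ 1) (ht0 : 0 ≤ t) (ht2 : t < 2) :
    p * Real.exp (t * (p - 1)) + (1 - p) * Real.exp (t * p) ≤ 1 + t ^ 2 / 2 := by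
  have hB := expB p hp0 hp1 ht0
  have hA := expA ht0 ht2.le
  have hpq : p * (1 - p) ≤ 1/4 := by nlinarith [sq_nonneg (p - 1/2)]
  have hnn : 0 ≤ Real.exp t - 1 - t := by nlinarith [Real.add_one_le_exp t]
  have hpq0 : 0 ≤ p * (1 - p) := mul_nonneg hp0 (by linarith)
  have : p * (1 - p) * (Real.exp t - 1 - t) ≤ (1/4) * (2 * t^2) :=
    mul_le_mul hpq (by linarith) hnn (by norm_num)
  linarith
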